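/- Inversion for universal quantifiers: if (γ, k) ⊢^α_c Γ, ∀x A(x), then for every natural number n, (γ, max(k,n)) ⊢^α_c Γ, A(n). -/

import Mathlib

open ONote in
/-- `α` is a successor ordinal notation (its Cantor normal form ends with `ω^0·m`). -/
def ONote.isSucc : ONote → Prop
  | ONote.zero => False
  | ONote.oadd e _ ONote.zero => e = 0
  | ONote.oadd _ _ (ONote.oadd e n a) => ONote.isSucc (ONote.oadd e n a)

instance : DecidablePred ONote.isSucc := by
  intro a
  induction a with
  | zero => exact .isFalse (by simp [ONote.isSucc])
  | oadd e n a ihe iha =>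
    cases a with
    | zero => exact decidable_of_iff (e = 0) Iff.rfl
    | oadd e' n' a' => exact iha

/-- The standard fundamental sequence assignment `α[x]` on Cantor normal forms:
`0[x] = 0`, `(α+1)[x] = α`, and for `λ` with last term `ω^(β+1)` one has
`λ[x] = (λ - ω^(β+1)) + ω^β·x`, while for last term `ω^γ` (`γ` limit),
`λ[x] = (λ - ω^γ) + ω^(γ[x])`. -/
def ONote.fseq : ONote → ℕ → ONote
  | ONote.zero, _ => ONote.zero
  | ONote.oadd e m (ONote.oadd e' m' a'), x =>
      ONote.oadd e m (ONote.fseq (ONote.oadd e' m' a') x)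
  | ONote.oadd ONote.zero m ONote.zero, _ =>
      if _h : m = 1 then ONote.zero else ONote.oadd ONote.zero (m - 1) ONote.zero
  | ONote.oadd (ONote.oadd e1 m1 a1) m ONote.zero, x =>
      let e := ONote.oadd e1 m1 a1
      let tail : ONote → ONote :=
        fun t => if m = 1 then t else ONote.oadd e (m - 1) t
      if ONote.isSucc e then
        match x with
        | 0 => tail ONote.zero
        | Nat.succ y => tail (ONote.oadd (ONote.fseq e (y+1)) (Nat.succPNat y) ONote.zero)
      else tail (ONote.oadd (ONote.fseq e x) 1 ONote.zero)

/-- `α <_n β` : transitive closure of `α = β[n]`. -/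
def ONote.stepLt (n : ℕ) (a b : ONote) : Prop :=
  Relation.TransGen (fun x y => x = ONote.fseq y n) a b

/-- `α ≤_n β`. -/
def ONote.stepLe (n : ℕ) (a b : ONote) : Prop :=
  ONote.stepLt n a b ∨ a = b

/-- The graph of the Hardy hierarchy: `H_0(x) = x`, `H_{α+1}(x) = H_α(x+1)`,
`H_λ(x) = H_{λ[x]}(x)` for limit `λ`. -/
inductive HardyRel : ONote → ℕ → ℕ → Prop
  | zero (x : ℕ) : HardyRel ONote.zero x x
  | succ {a : ONote} {x y : ℕ} (h : a.isSucc) (hrec : HardyRel (a.fseq x) (x + 1) y) :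
      HardyRel a x y
  | limit {a : ONote} {x y : ℕ} (h0 : a ≠ ONote.zero) (h : ¬ a.isSucc)
      (hrec : HardyRel (a.fseq x) x y) : HardyRel a x y

open scoped Classical in
/-- The Hardy function `H_α : ℕ → ℕ` (for `α` in normal form the defining
recursion terminates, so `hardy` is the unique value of the graph `HardyRel`). -/
noncomputable def hardy (a : ONote) (x : ℕ) : ℕ :=
  if h : ∃ y, HardyRel a x y then h.choose else 0

/-- Infinitary sentences of arithmetic: `Δ₀`-sentences are identified with their
truth value, and quantifiers range over numerals. -/
inductive Fml : Type 1 where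
  | delta0 (P : Prop) : Fml
  | or (A B : Fml) : Fml
  | and (A B : Fml) : Fml
  | ex (A : ℕ → Fml) : Fml
  | all (A : ℕ → Fml) : Fml

/-- Negation (de Morgan dual). -/
def Fml.neg : Fml → Fml
  | .delta0 P => .delta0 (¬ P)
  | .or A B => .and A.neg B.neg
  | .and A B => .or A.neg B.neg
  | .ex A => .all fun n => (A n).neg
  | .all A => .ex fun n => (A n).neg

/-- `dg(A)`: `dg = 0` on `Δ₀`, `max` at `∨,∧`, `+1` at quantifiers. -/
def Fml.dg : Fml → ℕ
  | .delta0 _ => 0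
  | .or A B => max A.dg B.dg
  | .and A B => max A.dg B.dg
  | .ex A => (A 0).dg + 1
  | .all A => (A 0).dg + 1

/-- `A` is a `Σ₁`-sentence `∃x A₀(x)` with `A₀ ∈ Δ₀`. -/
def Fml.IsSigma1 (A : Fml) : Prop :=
  ∃ f : ℕ → Fml, A = Fml.ex f ∧ ∀ n, ∃ P : Prop, f n = Fml.delta0 P

/-- Truth of a `Δ₀`-sentence. -/
def Fml.TrueD0 (A : Fml) : Prop := ∃ P : Prop, A = Fml.delta0 P ∧ P

/-- `k ⊨ ∃x A(x)` : there is a witness `n < k` making the `Δ₀`-matrix true. -/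
def Fml.SatBelow (k : ℕ) (A : Fml) : Prop :=
  ∃ f : ℕ → Fml, A = Fml.ex f ∧ ∃ n < k, (f n).TrueD0

/-- The witness-bounding derivability relation `(γ, k) ⊢^α_c Γ`, with
`ℓ = H_γ(k)` controlling ordinal descent and existential witnesses. -/
inductive Der : ONote → ℕ → ONote → ℕ → Set Fml → Prop
  | ax {γ : ONote} {k : ℕ} {α : ONote} {c : ℕ} {Γ : Set Fml} (P : Prop) (hP : P)
      (hmem : Fml.delta0 P ∈ Γ) : Der γ k α c Γ
  | cut {γ : ONote} {k : ℕ} {α α₀ : ONote} {c : ℕ} {Γ : Set Fml} (A : Fml)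
      (hord : ONote.stepLe (hardy γ k) (α₀ + 1) α) (hdg : A.dg < c)
      (d₁ : Der γ k α₀ c (insert A Γ)) (d₂ : Der γ k α₀ c (insert A.neg Γ)) :
      Der γ k α c Γ
  | and {γ : ONote} {k : ℕ} {α α₀ : ONote} {c : ℕ} {Γ : Set Fml} (A₀ A₁ : Fml)
      (hord : ONote.stepLt (hardy γ k) α₀ α) (hmem : Fml.and A₀ A₁ ∈ Γ)
      (d₀ : Der γ k α₀ c (insert A₀ Γ)) (d₁ : Der γ k α₀ c (insert A₁ Γ)) :
      Der γ k α c Γ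
  | or {γ : ONote} {k : ℕ} {α α₀ : ONote} {c : ℕ} {Γ : Set Fml} (A₀ A₁ : Fml) (i : Bool)
      (hord : ONote.stepLe (hardy γ k) (α₀ + 1) α) (hmem : Fml.or A₀ A₁ ∈ Γ)
      (d : Der γ k α₀ c (insert (cond i A₀ A₁) Γ)) : Der γ k α c Γ
  | allOmega {γ : ONote} {k : ℕ} {α α₀ : ONote} {c : ℕ} {Γ : Set Fml} (A : ℕ → Fml)
      (hord : ONote.stepLt (hardy γ k) α₀ α) (hmem : Fml.all A ∈ Γ)
      (d : ∀ n : ℕ, Der γ (max k n) α₀ c (insert (A n) Γ)) : Der γ k α c Γ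
  | exIntro {γ : ONote} {k : ℕ} {α α₀ : ONote} {c : ℕ} {Γ : Set Fml} (A : ℕ → Fml) (n : ℕ)
      (hord : ONote.stepLe (hardy γ k) (α₀ + 1) α) (hmem : Fml.ex A ∈ Γ)
      (hn : n < hardy γ k) (d : Der γ k α₀ c (insert (A n) Γ)) : Der γ k α c Γ

namespace ONote

theorem fseq_zero' (x : ℕ) : fseq 0 x = 0 := by simp [fseq]

theorem fseq_tail (e : ONote) (m : ℕ+) (e' : ONote) (m' : ℕ+) (a' : ONote) (x : ℕ) :
    fseq (oadd e m (oadd e' m' a')) x = oadd e m (fseq (oadd e' m' a') x) := by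
  simp [fseq]

theorem fseq_nat (m : ℕ+) (x : ℕ) :
    fseq (oadd 0 m 0) x = if m = 1 then 0 else oadd 0 (m - 1) 0 := by
  simp [fseq]

theorem fseq_head_succ_zero (e1 : ONote) (m1 : ℕ+) (a1 : ONote) (m : ℕ+)
    (hs : isSucc (oadd e1 m1 a1)) :
    fseq (oadd (oadd e1 m1 a1) m 0) 0 =
      (if m = 1 then (0:ONote) else oadd (oadd e1 m1 a1) (m - 1) 0) := by
  simp [fseq, hs]

theorem fseq_head_succ_succ (e1 : ONote) (m1 : ℕ+) (a1 : ONote) (m : ℕ+) (y : ℕ)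
    (hs : isSucc (oadd e1 m1 a1)) :
    fseq (oadd (oadd e1 m1 a1) m 0) (y + 1) =
      (if m = 1 then oadd (fseq (oadd e1 m1 a1) (y+1)) (Nat.succPNat y) 0
       else oadd (oadd e1 m1 a1) (m - 1) (oadd (fseq (oadd e1 m1 a1) (y+1)) (Nat.succPNat y) 0)) := by
  simp [fseq, hs]

theorem fseq_head_limit (e1 : ONote) (m1 : ℕ+) (a1 : ONote) (m : ℕ+) (x : ℕ)
    (hs : ¬ isSucc (oadd e1 m1 a1)) :
    fseq (oadd (oadd e1 m1 a1) m 0) x =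
      (if m = 1 then oadd (fseq (oadd e1 m1 a1) x) 1 0
       else oadd (oadd e1 m1 a1) (m - 1) (oadd (fseq (oadd e1 m1 a1) x) 1 0)) := by
  simp [fseq, hs]

end ONote
namespace ONote
open Ordinal

theorem oadd_ne_zero {e : ONote} {m : ℕ+} {a : ONote} : oadd e m a ≠ 0 := by
  intro h; exact ONote.noConfusion h

theorem pnat_one_lt {m : ℕ+} (hm : m ≠ 1) : (1:ℕ+) < m := by
  have h1 : (1:ℕ) ≤ (m:ℕ) := m.one_le
  have hne : (m:ℕ) ≠ 1 := fun h => hm (by exact_mod_cast h)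
  have : (1:ℕ) < (m:ℕ) := by omega
  exact_mod_cast this

theorem pnat_sub_one_coe {m : ℕ+} (hm : m ≠ 1) : ((m - 1 : ℕ+) : ℕ) = (m : ℕ) - 1 := by
  rw [PNat.sub_coe, if_pos (pnat_one_lt hm)]; simp

theorem repr_oadd_lt_omega0_opow {c : ONote} {j : ℕ+} {r : Ordinal}
    (h : repr c < r) : repr (oadd c j 0) < ω ^ r := by
  have h1 : repr (oadd c j 0) = ω ^ repr c * (j : ℕ) := by simp
  rw [h1]
  calc ω ^ repr c * (j : ℕ) < ω ^ repr c * ω :=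
        (mul_lt_mul_iff_right₀ (Ordinal.opow_pos _ Ordinal.omega0_pos)).2
          (Ordinal.nat_lt_omega0 j)
    _ = ω ^ (repr c + 1) := by
        rw [Ordinal.add_one_eq_succ, Ordinal.opow_succ]
    _ ≤ ω ^ r := by
        apply Ordinal.opow_le_opow_right Ordinal.omega0_pos
        rwa [Ordinal.add_one_eq_succ, Order.succ_le_iff]

theorem repr_fseq_lt : ∀ (a : ONote), a ≠ 0 → ∀ x : ℕ, repr (fseq a x) < repr a := by
  intro a
  induction a with
  | zero => intro h; exact absurd rfl h
  | oadd e m t ihe iht =>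
    intro _ x
    cases t with
    | oadd e' m' a' =>
      rw [fseq_tail]
      have := iht oadd_ne_zero x
      simpa using this
    | zero =>
      simp only [zero_def]
      cases e with
      | zero =>
        simp only [zero_def]
        rw [fseq_nat]
        split
        · simpa using (oadd_pos 0 m 0 : (0:ONote) < _)
        · next hm =>
          simp only [repr, Ordinal.opow_zero, one_mul, add_zero, pnat_sub_one_coe hm]
          have h2 : (1:ℕ) < (m:ℕ) := by exact_mod_cast pnat_one_lt hm
          have : ((m:ℕ) - 1 : ℕ) < (m:ℕ) := by omega
          exact_mod_cast this
      | oadd e1 m1 a1 =>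
        have hce : ∀ x' : ℕ, repr (fseq (oadd e1 m1 a1) x') < repr (oadd e1 m1 a1) :=
          fun x' => ihe oadd_ne_zero x'
        have key : ∀ t' : ONote, repr t' < ω ^ repr (oadd e1 m1 a1) →
            repr (if m = 1 then t' else oadd (oadd e1 m1 a1) (m - 1) t')
              < repr (oadd (oadd e1 m1 a1) m 0) := by
          intro t' ht'
          split
          · next hm =>
            subst hm
            simp only [repr, add_zero, PNat.one_coe, Nat.cast_one, mul_one]
            exact ht'
          · next hm =>
            simp only [repr, add_zero, pnat_sub_one_coe hm]
            have h2 : (1:ℕ) < (m:ℕ) := by exact_mod_cast pnat_one_lt hm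
            calc ω ^ repr (oadd e1 m1 a1) * (((m:ℕ) - 1 : ℕ) : Ordinal) + repr t'
                < ω ^ repr (oadd e1 m1 a1) * (((m:ℕ) - 1 : ℕ) : Ordinal)
                    + ω ^ repr (oadd e1 m1 a1) :=
                  (add_lt_add_iff_left _).2 ht'
              _ = ω ^ repr (oadd e1 m1 a1) * ((((m:ℕ) - 1 : ℕ) : Ordinal) + 1) := by
                  rw [mul_add_one]
              _ = ω ^ repr (oadd e1 m1 a1) * ((m:ℕ) : Ordinal) := by
                  congr 1
                  have h3 : ((m:ℕ) - 1) + 1 = (m:ℕ) := by omega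
                  exact_mod_cast h3
        by_cases hs : isSucc (oadd e1 m1 a1)
        · cases x with
          | zero =>
            rw [fseq_head_succ_zero _ _ _ _ hs]
            exact key 0 (by simpa using Ordinal.opow_pos (repr (oadd e1 m1 a1)) Ordinal.omega0_pos)
          | succ y =>
            rw [fseq_head_succ_succ _ _ _ _ _ hs]
            exact key _ (repr_oadd_lt_omega0_opow (hce (y+1)))
        · rw [fseq_head_limit _ _ _ _ _ hs]
          exact key _ (repr_oadd_lt_omega0_opow (hce x))

theorem fseq_lt {a : ONote} (h : a ≠ 0) (x : ℕ) : fseq a x < a :=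
  repr_fseq_lt a h x

end ONote
namespace ONote

theorem stepLt.single {x : ℕ} {a b : ONote} (h : a = fseq b x) : stepLt x a b :=
  Relation.TransGen.single h

theorem stepLt.trans {x : ℕ} {a b c : ONote} (h1 : stepLt x a b) (h2 : stepLt x b c) :
    stepLt x a c :=
  Relation.TransGen.trans h1 h2

theorem stepLe.refl (x : ℕ) (a : ONote) : stepLe x a a := Or.inr rfl

theorem stepLe.trans {x : ℕ} {a b c : ONote} (h1 : stepLe x a b) (h2 : stepLe x b c) :
    stepLe x a c := by
  rcases h1 with h1 | rfl
  · rcases h2 with h2 | rfl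
    · exact Or.inl (h1.trans h2)
    · exact Or.inl h1
  · exact h2

theorem stepLe.trans_lt {x : ℕ} {a b c : ONote} (h1 : stepLe x a b) (h2 : stepLt x b c) :
    stepLt x a c := by
  rcases h1 with h1 | rfl
  · exact h1.trans h2
  · exact h2

theorem stepLt.trans_le {x : ℕ} {a b c : ONote} (h1 : stepLt x a b) (h2 : stepLe x b c) :
    stepLt x a c := by
  rcases h2 with h2 | rfl
  · exact h1.trans h2
  · exact h1

theorem stepLt.le {x : ℕ} {a b : ONote} (h : stepLt x a b) : stepLe x a b := Or.inl h

theorem stepLe.step {x : ℕ} {a b c : ONote} (h1 : stepLe x a b) (h2 : b = fseq c x) :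
    stepLt x a c :=
  h1.trans_lt (stepLt.single h2)

theorem stepLt_zero {x : ℕ} {a b : ONote} (h : stepLt x a b) (hb : b = 0) : a = 0 := by
  induction h with
  | single h => subst hb; simpa [fseq_zero'] using h
  | tail _ h ih => subst hb; exact ih (by simpa [fseq_zero'] using h)

/-- Congruence: descent in the tail lifts through `oadd`. -/
theorem stepLt.oadd_tail {x : ℕ} {t1 t2 : ONote} (e : ONote) (m : ℕ+)
    (h : stepLt x t1 t2) (h1 : t1 ≠ 0) : stepLt x (oadd e m t1) (oadd e m t2) := by
  induction h with
  | @single d h =>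
    cases d with
    | zero => exact absurd (stepLt_zero (stepLt.single h) rfl) h1
    | oadd e' m' a' => exact stepLt.single (by rw [fseq_tail]; exact congrArg _ h)
  | @tail b c hbc h ih =>
    have hb : b ≠ 0 := fun hb0 => h1 (stepLt_zero hbc hb0)
    cases c with
    | zero => exact absurd (by simpa [fseq_zero'] using h) hb
    | oadd e' m' a' =>
      exact ih.trans_le (Or.inl (stepLt.single (by rw [fseq_tail]; exact congrArg _ h)))

theorem stepLe.oadd_tail {x : ℕ} {t1 t2 : ONote} (e : ONote) (m : ℕ+)
    (h : stepLe x t1 t2) (h1 : t1 ≠ 0) : stepLe x (oadd e m t1) (oadd e m t2) := by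
  rcases h with h | rfl
  · exact (h.oadd_tail e m h1).le
  · exact stepLe.refl _ _

/-- Every notation descends to `0` along the fundamental sequences. -/
theorem stepLe_zero_left (x : ℕ) : ∀ a : ONote, stepLe x 0 a
  | a => by
    by_cases h : a = 0
    · exact h ▸ stepLe.refl _ _
    · have hlt := fseq_lt h x
      have := stepLe_zero_left x (fseq a x)
      exact this.step rfl |>.le
  termination_by a => a

/-- From any nonzero notation, some nonzero `s` in the chain has `fseq s x = 0`. -/
theorem exists_fseq_zero (x : ℕ) : ∀ a : ONote, a ≠ 0 →
    ∃ s : ONote, s ≠ 0 ∧ stepLe x s a ∧ fseq s x = 0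
  | a => fun h => by
    by_cases h0 : fseq a x = 0
    · exact ⟨a, h, stepLe.refl _ _, h0⟩
    · have hlt := fseq_lt h x
      obtain ⟨s, hs0, hss, hsz⟩ := exists_fseq_zero x (fseq a x) h0
      exact ⟨s, hs0, (hss.step rfl).le, hsz⟩
  termination_by a => a

/-- Kill the tail: `ω^e·m ≤ₓ ω^e·m + t`. -/
theorem stepLe_oadd_zero (x : ℕ) (e : ONote) (m : ℕ+) (t : ONote) :
    stepLe x (oadd e m 0) (oadd e m t) := by
  by_cases h : t = 0
  · exact h ▸ stepLe.refl _ _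
  · obtain ⟨s, hs0, hss, hsz⟩ := exists_fseq_zero x t h
    have h1 : stepLe x (oadd e m s) (oadd e m t) := hss.oadd_tail e m hs0
    refine stepLe.trans (Or.inl (stepLt.single ?_)) h1
    cases s with
    | zero => exact absurd rfl hs0
    | oadd e' m' a' => rw [fseq_tail, hsz]

end ONote
namespace ONote

theorem pnat_add_one_sub_one (j : ℕ+) : (j + 1) - 1 = j := by
  have h : (1:ℕ+) < j + 1 := by
    have h2 : (1:ℕ) < (j:ℕ) + 1 := by have := j.pos; omega
    exact_mod_cast h2
  apply PNat.coe_injective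
  rw [PNat.sub_coe, if_pos h, PNat.add_coe, PNat.one_coe]
  simp

theorem pnat_add_one_ne_one (j : ℕ+) : j + 1 ≠ 1 := by
  intro h
  have h2 : (j:ℕ) + 1 = 1 := by exact_mod_cast h
  have := j.pos
  omega

/-- One coefficient step: `ω^c·j ≤ₓ ω^c·(j+1)`. -/
theorem stepLe_coeff_one (x : ℕ) (c : ONote) (j : ℕ+) :
    stepLe x (oadd c j 0) (oadd c (j + 1) 0) := by
  cases c with
  | zero =>
    simp only [zero_def]
    refine ((stepLe.refl x _).step ?_).le
    rw [fseq_nat, if_neg (pnat_add_one_ne_one j), pnat_add_one_sub_one]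
  | oadd e1 m1 a1 =>
    by_cases hs : isSucc (oadd e1 m1 a1)
    · cases x with
      | zero =>
        refine ((stepLe.refl 0 _).step ?_).le
        rw [fseq_head_succ_zero _ _ _ _ hs, if_neg (pnat_add_one_ne_one j),
          pnat_add_one_sub_one]
      | succ y =>
        have hname : fseq (oadd (oadd e1 m1 a1) (j+1) 0) (y+1) =
            oadd (oadd e1 m1 a1) j
              (oadd (fseq (oadd e1 m1 a1) (y+1)) (Nat.succPNat y) 0) := by
          rw [fseq_head_succ_succ _ _ _ _ _ hs, if_neg (pnat_add_one_ne_one j),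
            pnat_add_one_sub_one]
        exact stepLe.trans (stepLe_oadd_zero (y+1) _ j _) (stepLt.single hname.symm).le
    · have hname : fseq (oadd (oadd e1 m1 a1) (j+1) 0) x =
          oadd (oadd e1 m1 a1) j (oadd (fseq (oadd e1 m1 a1) x) 1 0) := by
        rw [fseq_head_limit _ _ _ _ _ hs, if_neg (pnat_add_one_ne_one j),
          pnat_add_one_sub_one]
      exact stepLe.trans (stepLe_oadd_zero x _ j _) (stepLt.single hname.symm).le

/-- Coefficient monotonicity: `ω^c·j ≤ₓ ω^c·j'` for `j ≤ j'`. -/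
theorem stepLe_coeff (x : ℕ) (c : ONote) :
    ∀ (n : ℕ) (j j' : ℕ+), (j' : ℕ) = (j : ℕ) + n → stepLe x (oadd c j 0) (oadd c j' 0) := by
  intro n
  induction n with
  | zero =>
    intro j j' h
    have h2 : (j' : ℕ) = (j : ℕ) := by omega
    have : j' = j := PNat.coe_injective h2
    subst this; exact stepLe.refl _ _
  | succ n ih =>
    intro j j' h
    have hj1 : j' ≠ 1 := by
      intro h1
      subst h1
      have := j.pos
      simp only [PNat.one_coe] at h
      omega
    have hcoe : ((j' - 1 : ℕ+) : ℕ) = (j' : ℕ) - 1 := pnat_sub_one_coe hj1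
    have hstep : stepLe x (oadd c j 0) (oadd c (j' - 1) 0) := by
      apply ih j (j' - 1)
      rw [hcoe]; omega
    refine hstep.trans ?_
    have : (j' - 1) + 1 = j' := by
      have h3 : (((j' - 1) + 1 : ℕ+) : ℕ) = (j' : ℕ) := by
        rw [PNat.add_coe, hcoe, PNat.one_coe]
        have := j'.pos
        omega
      exact PNat.coe_injective h3
    rw [← this]
    exact stepLe_coeff_one x c _

theorem stepLe_coeff' (x : ℕ) (c : ONote) {j j' : ℕ+} (h : j ≤ j') :
    stepLe x (oadd c j 0) (oadd c j' 0) := by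
  have h2 : (j:ℕ) ≤ (j':ℕ) := h
  exact stepLe_coeff x c ((j':ℕ) - (j:ℕ)) j j' (by omega)

/-- `fseq` of a successor does not depend on the argument. -/
theorem fseq_succ_const : ∀ (a : ONote), isSucc a → ∀ x y : ℕ, fseq a x = fseq a y := by
  intro a
  induction a with
  | zero => intro h; exact absurd h (by simp [isSucc])
  | oadd e m t ihe iht =>
    intro h x y
    cases t with
    | zero =>
      have he : e = 0 := h
      subst he
      simp only [zero_def]
      rw [fseq_nat, fseq_nat]
    | oadd e' m' a' =>
      have ht : isSucc (oadd e' m' a') := h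
      rw [fseq_tail, fseq_tail, iht ht x y]

/-- Exponent monotonicity, single step. -/
theorem stepLe_exp_single {x : ℕ} (hx : 1 ≤ x) {b b' : ONote} (h : b = fseq b' x) :
    stepLe x (oadd b 1 0) (oadd b' 1 0) := by
  cases b' with
  | zero =>
    rw [h]
    simp only [zero_def, fseq_zero']
    exact stepLe.refl _ _
  | oadd e1 m1 a1 =>
    by_cases hs : isSucc (oadd e1 m1 a1)
    · obtain ⟨y, rfl⟩ : ∃ y, x = y + 1 := ⟨x - 1, by omega⟩
      refine stepLe.trans (stepLe_coeff' (y+1) b (j := 1) (j' := Nat.succPNat y) ?_)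
        (stepLt.single ?_).le
      · have : (1:ℕ) ≤ y + 1 := by omega
        exact_mod_cast this
      · rw [fseq_head_succ_succ _ _ _ _ _ hs, if_pos rfl, h]
    · refine (stepLt.single ?_).le
      rw [fseq_head_limit _ _ _ _ _ hs, if_pos rfl, h]

/-- Exponent monotonicity: `b ≤ₓ b'` implies `ω^b ≤ₓ ω^b'` (for `x ≥ 1`). -/
theorem stepLe_exp {x : ℕ} (hx : 1 ≤ x) {b b' : ONote} (h : stepLe x b b') :
    stepLe x (oadd b 1 0) (oadd b' 1 0) := by
  rcases h with h | rfl
  · induction h with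
    | @single d hd => exact stepLe_exp_single hx hd
    | @tail p q hpq hqd ih => exact ih.trans (stepLe_exp_single hx hqd)
  · exact stepLe.refl _ _

end ONote
namespace ONote

/-- Bachmann property: `a[n] ≤ₘ a[m]` for `n ≤ m`. -/
theorem fseq_mono : ∀ (a : ONote) {n m : ℕ}, n ≤ m → stepLe m (fseq a n) (fseq a m) := by
  intro a
  induction a with
  | zero => intro n m _; exact stepLe.refl _ _
  | oadd e m₀ t ihe iht =>
    intro n m hnm
    rcases eq_or_lt_of_le hnm with rfl | hlt
    · exact stepLe.refl _ _
    have hm1 : 1 ≤ m := by omega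
    cases t with
    | oadd e' m' a' =>
      rw [fseq_tail, fseq_tail]
      rcases iht hnm with hlt' | heq
      · by_cases h0 : fseq (oadd e' m' a') n = 0
        · rw [h0]
          by_cases h1 : fseq (oadd e' m' a') m = 0
          · rw [h1]; exact stepLe.refl _ _
          · obtain ⟨s, hs0, hss, hsz⟩ := exists_fseq_zero m _ h1
            have hcong : stepLe m (oadd e m₀ s) (oadd e m₀ (fseq (oadd e' m' a') m)) :=
              hss.oadd_tail e m₀ hs0
            refine stepLe.trans (stepLt.single ?_).le hcong
            cases s with
            | zero => exact absurd rfl hs0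
            | oadd e2 m2 a2 => rw [fseq_tail, hsz]
        · exact (hlt'.oadd_tail e m₀ h0).le
      · rw [heq]; exact stepLe.refl _ _
    | zero =>
      cases e with
      | zero =>
        simp only [zero_def]
        rw [fseq_nat, fseq_nat]
        exact stepLe.refl _ _
      | oadd e1 m1 a1 =>
        simp only [zero_def]
        by_cases hs : isSucc (oadd e1 m1 a1)
        · obtain ⟨y, rfl⟩ : ∃ y, m = y + 1 := ⟨m - 1, by omega⟩
          rw [fseq_head_succ_succ _ _ _ _ _ hs]
          cases n with
          | zero =>
            rw [fseq_head_succ_zero _ _ _ _ hs]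
            split
            · exact stepLe_zero_left _ _
            · exact stepLe_oadd_zero _ _ _ _
          | succ z =>
            rw [fseq_head_succ_succ _ _ _ _ _ hs]
            have hc : fseq (oadd e1 m1 a1) (z+1) = fseq (oadd e1 m1 a1) (y+1) :=
              fseq_succ_const _ hs _ _
            rw [hc]
            have hco : stepLe (y+1) (oadd (fseq (oadd e1 m1 a1) (y+1)) (Nat.succPNat z) 0)
                (oadd (fseq (oadd e1 m1 a1) (y+1)) (Nat.succPNat y) 0) := by
              apply stepLe_coeff' (y+1) _
              have : z + 1 ≤ y + 1 := by omega
              exact_mod_cast this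
            split
            · exact hco
            · exact hco.oadd_tail _ _ oadd_ne_zero
        · rw [fseq_head_limit _ _ _ _ _ hs, fseq_head_limit _ _ _ _ _ hs]
          have hco := stepLe_exp hm1 (ihe hnm)
          split
          · exact hco
          · exact hco.oadd_tail _ _ oadd_ne_zero

/-- Monotonicity of `<ₗ` in the parameter. -/
theorem stepLt_mono_param {l l' : ℕ} (h : l ≤ l') {a b : ONote} (hab : stepLt l a b) :
    stepLt l' a b := by
  induction hab with
  | @single d hd => exact (hd ▸ fseq_mono d h).step rfl
  | @tail p q hpq hqd ih => exact ih.trans_le ((hqd ▸ fseq_mono q h).step rfl).le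

theorem stepLe_mono_param {l l' : ℕ} (h : l ≤ l') {a b : ONote} (hab : stepLe l a b) :
    stepLe l' a b := by
  rcases hab with hab | rfl
  · exact (stepLt_mono_param h hab).le
  · exact stepLe.refl _ _

end ONote
section Hardy
open ONote

theorem hardyRel_exists : ∀ (a : ONote) (x : ℕ), ∃ y, HardyRel a x y
  | a, x => by
    by_cases h0 : a = 0
    · exact ⟨x, h0 ▸ HardyRel.zero x⟩
    · by_cases hs : isSucc a
      · have hlt : fseq a x < a := fseq_lt h0 x
        obtain ⟨y, hy⟩ := hardyRel_exists (fseq a x) (x+1)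
        exact ⟨y, HardyRel.succ hs hy⟩
      · have hlt : fseq a x < a := fseq_lt h0 x
        obtain ⟨y, hy⟩ := hardyRel_exists (fseq a x) x
        exact ⟨y, HardyRel.limit h0 hs hy⟩
  termination_by a => a

theorem hardyRel_unique {a : ONote} {x y y' : ℕ} (h : HardyRel a x y)
    (h' : HardyRel a x y') : y = y' := by
  induction h generalizing y' with
  | zero x =>
    cases h' with
    | zero => rfl
    | succ hs _ => exact absurd hs (by simp [isSucc])
    | limit h0 _ _ => exact absurd rfl h0
  | succ hs hrec ih =>
    cases h' with
    | zero => exact absurd hs (by simp [isSucc])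
    | succ hs' hrec' => exact ih hrec'
    | limit h0 hns _ => exact absurd hs hns
  | limit h0 hns hrec ih =>
    cases h' with
    | zero => exact absurd rfl h0
    | succ hs _ => exact absurd hs hns
    | limit h0' hns' hrec' => exact ih hrec'

theorem hardy_eq {a : ONote} {x y : ℕ} (h : HardyRel a x y) : hardy a x = y := by
  unfold hardy
  rw [dif_pos ⟨y, h⟩]
  exact hardyRel_unique (Exists.choose_spec ⟨y, h⟩) h

theorem hardyRel_hardy (a : ONote) (x : ℕ) : HardyRel a x (hardy a x) := by
  obtain ⟨y, hy⟩ := hardyRel_exists a x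
  rw [hardy_eq hy]; exact hy

theorem hardy_zero (x : ℕ) : hardy 0 x = x := hardy_eq (HardyRel.zero x)

theorem hardy_succ {a : ONote} (hs : isSucc a) (x : ℕ) :
    hardy a x = hardy (fseq a x) (x + 1) :=
  hardy_eq (HardyRel.succ hs (hardyRel_hardy _ _))

theorem hardy_limit {a : ONote} (h0 : a ≠ 0) (hs : ¬ isSucc a) (x : ℕ) :
    hardy a x = hardy (fseq a x) x :=
  hardy_eq (HardyRel.limit h0 hs (hardyRel_hardy _ _))

theorem hardy_both : ∀ a : ONote,
    (∀ x, hardy a x ≤ hardy a (x+1)) ∧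
    (∀ b x, stepLe x b a → hardy b x ≤ hardy a x) := by
  have main : ∀ o : Ordinal, ∀ a : ONote, ONote.repr a = o →
      ((∀ x, hardy a x ≤ hardy a (x+1)) ∧
       (∀ b x, stepLe x b a → hardy b x ≤ hardy a x)) := by
    intro o
    induction o using Ordinal.induction with
    | h o IH =>
      intro a ha
      have IH' : ∀ a' : ONote, ONote.repr a' < ONote.repr a →
          ((∀ x, hardy a' x ≤ hardy a' (x+1)) ∧
           (∀ b x, stepLe x b a' → hardy b x ≤ hardy a' x)) := by
        intro a' h
        exact IH _ (ha ▸ h) a' rfl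
      have hfle : ∀ x, hardy (fseq a x) x ≤ hardy a x := by
        intro x
        by_cases h0 : a = 0
        · subst h0; rw [fseq_zero']
        · by_cases hs : isSucc a
          · rw [hardy_succ hs]
            exact (IH' (fseq a x) (repr_fseq_lt a h0 x)).1 x
          · rw [hardy_limit h0 hs]
      constructor
      · intro x
        by_cases h0 : a = 0
        · subst h0; rw [hardy_zero, hardy_zero]; omega
        · by_cases hs : isSucc a
          · rw [hardy_succ hs, hardy_succ hs, fseq_succ_const a hs (x+1) x]
            exact (IH' (fseq a x) (repr_fseq_lt a h0 x)).1 (x+1)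
          · rw [hardy_limit h0 hs, hardy_limit h0 hs]
            calc hardy (fseq a x) x ≤ hardy (fseq a x) (x+1) :=
                  (IH' (fseq a x) (repr_fseq_lt a h0 x)).1 x
              _ ≤ hardy (fseq a (x+1)) (x+1) :=
                  (IH' (fseq a (x+1)) (repr_fseq_lt a h0 (x+1))).2 _ _
                    (fseq_mono a (Nat.le_succ x))
      · intro b x h
        rcases h with h | rfl
        · cases h with
          | single hd => rw [hd]; exact hfle x
          | @tail c _ hbc hcd =>
            by_cases h0 : a = 0
            · have hc0 : c = 0 := by rw [hcd, h0, fseq_zero']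
              have hb0 : b = 0 := stepLt_zero hbc hc0
              rw [hb0, h0]
            · have h1 : hardy b x ≤ hardy c x :=
                (IH' c (hcd ▸ repr_fseq_lt a h0 x)).2 b x (Or.inl hbc)
              exact h1.trans (hcd ▸ hfle x)
        · exact le_refl _
  exact fun a => main (ONote.repr a) a rfl

theorem hardy_mono_x (a : ONote) : ∀ {x y : ℕ}, x ≤ y → hardy a x ≤ hardy a y := by
  intro x y h
  induction y with
  | zero =>
    have : x = 0 := by omega
    subst this; exact le_refl _
  | succ y ih =>
    rcases Nat.lt_or_ge x (y+1) with h' | h'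
    · exact (ih (by omega)).trans ((hardy_both a).1 y)
    · have : x = y + 1 := by omega
      subst this; exact le_refl _

end Hardy
section DerLemmas
open ONote

theorem Fml.mem_insert_diff {B X Y : Fml} {S : Set Fml} (h : B ∈ S) (hne : B ≠ X) :
    B ∈ insert Y (S \ {X}) :=
  Set.mem_insert_of_mem _ ⟨h, by simpa using hne⟩

theorem Fml.set_shuffle {W B X : Fml} {S : Set Fml} :
    insert W ((insert B S) \ {X}) ⊆ insert B (insert W (S \ {X})) := by
  intro y hy
  simp only [Set.mem_insert_iff, Set.mem_diff, Set.mem_singleton_iff] at *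
  tauto

/-- Weakening: larger base `k` and larger context. -/
theorem Der.weak {γ : ONote} {k : ℕ} {α : ONote} {c : ℕ} {Γ : Set Fml}
    (d : Der γ k α c Γ) :
    ∀ {k' : ℕ} {Γ' : Set Fml}, k ≤ k' → Γ ⊆ Γ' → Der γ k' α c Γ' := by
  induction d with
  | ax P hP hmem =>
    intro k' Γ' hk hΓ
    exact Der.ax P hP (hΓ hmem)
  | cut A hord hdg d1 d2 ih1 ih2 =>
    intro k' Γ' hk hΓ
    exact Der.cut A (stepLe_mono_param (hardy_mono_x _ hk) hord) hdg
      (ih1 hk (Set.insert_subset_insert hΓ)) (ih2 hk (Set.insert_subset_insert hΓ))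
  | and A0 A1 hord hmem d0 d1 ih0 ih1 =>
    intro k' Γ' hk hΓ
    exact Der.and A0 A1 (stepLt_mono_param (hardy_mono_x _ hk) hord) (hΓ hmem)
      (ih0 hk (Set.insert_subset_insert hΓ)) (ih1 hk (Set.insert_subset_insert hΓ))
  | or A0 A1 i hord hmem d ih =>
    intro k' Γ' hk hΓ
    exact Der.or A0 A1 i (stepLe_mono_param (hardy_mono_x _ hk) hord) (hΓ hmem)
      (ih hk (Set.insert_subset_insert hΓ))
  | allOmega A hord hmem d ih =>
    intro k' Γ' hk hΓ
    exact Der.allOmega A (stepLt_mono_param (hardy_mono_x _ hk) hord) (hΓ hmem)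
      (fun n => ih n (max_le_max hk (le_refl n)) (Set.insert_subset_insert hΓ))
  | exIntro A n hord hmem hn d ih =>
    intro k' Γ' hk hΓ
    exact Der.exIntro A n (stepLe_mono_param (hardy_mono_x _ hk) hord) (hΓ hmem)
      (hn.trans_le (hardy_mono_x _ hk)) (ih hk (Set.insert_subset_insert hΓ))

/-- Raising the ordinal bound. -/
theorem Der.up {γ : ONote} {k : ℕ} {α α' : ONote} {c : ℕ} {Γ : Set Fml}
    (d : Der γ k α c Γ) (h : ONote.stepLe (hardy γ k) α α') : Der γ k α' c Γ := by
  cases d with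
  | ax P hP hmem => exact Der.ax P hP hmem
  | cut A hord hdg d1 d2 => exact Der.cut A (hord.trans h) hdg d1 d2
  | and A0 A1 hord hmem d0 d1 => exact Der.and A0 A1 (hord.trans_le h) hmem d0 d1
  | or A0 A1 i hord hmem d => exact Der.or A0 A1 i (hord.trans h) hmem d
  | allOmega A hord hmem d => exact Der.allOmega A (hord.trans_le h) hmem d
  | exIntro A n hord hmem hn d => exact Der.exIntro A n (hord.trans h) hmem hn d

/-- Inversion, general form. -/
theorem Der.inv_all {A : ℕ → Fml} {γ : ONote} {k : ℕ} {α : ONote} {c : ℕ} {Δ : Set Fml}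
    (d : Der γ k α c Δ) :
    ∀ n : ℕ, Fml.all A ∈ Δ → Der γ (max k n) α c (insert (A n) (Δ \ {Fml.all A})) := by
  induction d with
  | ax P hP hmem =>
    intro n _
    exact Der.ax P hP (Fml.mem_insert_diff hmem (fun h => Fml.noConfusion h))
  | cut B hord hdg d1 d2 ih1 ih2 =>
    intro n hmem
    refine Der.cut B (stepLe_mono_param (hardy_mono_x _ (Nat.le_max_left _ n)) hord) hdg ?_ ?_
    · exact (ih1 n (Set.mem_insert_of_mem _ hmem)).weak le_rfl Fml.set_shuffle
    · exact (ih2 n (Set.mem_insert_of_mem _ hmem)).weak le_rfl Fml.set_shuffle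
  | and A0 A1 hord hmem' d0 d1 ih0 ih1 =>
    intro n hmem
    refine Der.and A0 A1 (stepLt_mono_param (hardy_mono_x _ (Nat.le_max_left _ n)) hord)
      (Fml.mem_insert_diff hmem' (fun h => Fml.noConfusion h)) ?_ ?_
    · exact (ih0 n (Set.mem_insert_of_mem _ hmem)).weak le_rfl Fml.set_shuffle
    · exact (ih1 n (Set.mem_insert_of_mem _ hmem)).weak le_rfl Fml.set_shuffle
  | or A0 A1 i hord hmem' d ih =>
    intro n hmem
    exact Der.or A0 A1 i (stepLe_mono_param (hardy_mono_x _ (Nat.le_max_left _ n)) hord)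
      (Fml.mem_insert_diff hmem' (fun h => Fml.noConfusion h))
      ((ih n (Set.mem_insert_of_mem _ hmem)).weak le_rfl Fml.set_shuffle)
  | exIntro B n' hord hmem' hn d ih =>
    intro n hmem
    exact Der.exIntro B n' (stepLe_mono_param (hardy_mono_x _ (Nat.le_max_left _ n)) hord)
      (Fml.mem_insert_diff hmem' (fun h => Fml.noConfusion h))
      (hn.trans_le (hardy_mono_x _ (Nat.le_max_left _ n)))
      ((ih n (Set.mem_insert_of_mem _ hmem)).weak le_rfl Fml.set_shuffle)
  | allOmega B hord hmem' d ih =>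
    intro n hmem
    by_cases heq : Fml.all B = Fml.all A
    · have hBA : B = A := by injection heq
      subst hBA
      have h1 := ih n n (Set.mem_insert_of_mem _ hmem)
      refine Der.up (h1.weak (by omega) ?_)
        (Or.inl (stepLt_mono_param (hardy_mono_x _ (Nat.le_max_left _ n)) hord))
      intro y hy
      simp only [Set.mem_insert_iff, Set.mem_diff, Set.mem_singleton_iff] at *
      tauto
    · refine Der.allOmega B (stepLt_mono_param (hardy_mono_x _ (Nat.le_max_left _ n)) hord)
        (Fml.mem_insert_diff hmem' heq) (fun m => ?_)
      exact (ih m n (Set.mem_insert_of_mem _ hmem)).weak (by omega) Fml.set_shuffle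

end DerLemmas

/-- Inversion: if `(γ,k) ⊢^α_c Γ, ∀x A(x)`, then for every `n`,
`(γ, max(k,n)) ⊢^α_c Γ, A(n)`. -/
theorem Der.inversion (γ α : ONote) (k c : ℕ) (Γ : Set Fml) (A : ℕ → Fml)
    (hγ : γ.NF) (hα : α.NF)
    (d : Der γ k α c (insert (Fml.all A) Γ)) :
    ∀ n : ℕ, Der γ (max k n) α c (insert (A n) Γ) := by
  intro n
  refine (Der.inv_all d n (Set.mem_insert _ _)).weak le_rfl ?_
  intro y hy
  simp only [Set.mem_insert_iff, Set.mem_diff, Set.mem_singleton_iff] at *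
  tauto
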